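/- Fourth-moment bound for factor-model quadratic forms (Lemma 2.2, same-covariance case, with Δ ≥ 0): let Γ be a real p×m matrix, X = Γ Z, Σ = Γ Γᵀ, and let M be any symmetric positive semidefinite real p×p matrix. Then E[(Xᵀ M X)²] ≤ (tr(MΣ))² + (2 + Δ) tr(MΣMΣ). In particular, taking M = W^{1/2} Σ_α W^{1/2} yields E[(Yᵀ W^{1/2} Σ_α W^{1/2} Y)²] ≤ (tr(WΣ_α WΣ))² + (2+Δ) tr((WΣ_α WΣ)²) for Y = W^{1/2} X. -/

import Mathlib

open MeasureTheory ProbabilityTheory Matrix Filter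
open scoped ENNReal

open scoped ComplexOrder in
noncomputable def Matrix.PosSemidef.sqrt {n 𝕜 : Type*} [Fintype n] [RCLike 𝕜] [DecidableEq n]
    {A : Matrix n n 𝕜} (hA : A.PosSemidef) : Matrix n n 𝕜 :=
  hA.1.eigenvectorUnitary.1 * diagonal ((↑) ∘ (√·) ∘ hA.1.eigenvalues) *
    (star hA.1.eigenvectorUnitary : Matrix n n 𝕜)

private lemma sqrt_herm' {p : ℕ} {W : Matrix (Fin p) (Fin p) ℝ} (hW : W.PosSemidef) :
    (hW.sqrt)ᴴ = hW.sqrt := by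
  unfold Matrix.PosSemidef.sqrt
  rw [conjTranspose_mul, conjTranspose_mul, diagonal_conjTranspose, ← star_eq_conjTranspose,
    ← star_eq_conjTranspose, star_star, Matrix.mul_assoc]
  congr 2

private lemma sqrt_mul_self' {p : ℕ} {W : Matrix (Fin p) (Fin p) ℝ} (hW : W.PosSemidef) :
    hW.sqrt * hW.sqrt = W := by
  conv_rhs => rw [hW.1.spectral_theorem, Unitary.conjStarAlgAut_apply]
  unfold Matrix.PosSemidef.sqrt
  have hU : (star hW.1.eigenvectorUnitary : Matrix (Fin p) (Fin p) ℝ) * hW.1.eigenvectorUnitary.1 = 1 :=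
    Unitary.coe_star_mul_self _
  have hD : diagonal ((↑) ∘ (√·) ∘ hW.1.eigenvalues) * diagonal ((↑) ∘ (√·) ∘ hW.1.eigenvalues)
      = diagonal (RCLike.ofReal ∘ hW.1.eigenvalues : Fin p → ℝ) := by
    rw [diagonal_mul_diagonal]
    congr 1
    funext i
    simp [Real.mul_self_sqrt (hW.eigenvalues_nonneg i)]
  calc _ = hW.1.eigenvectorUnitary.1 * (diagonal ((↑) ∘ (√·) ∘ hW.1.eigenvalues) *
        ((star hW.1.eigenvectorUnitary : Matrix (Fin p) (Fin p) ℝ) * hW.1.eigenvectorUnitary.1) *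
        diagonal ((↑) ∘ (√·) ∘ hW.1.eigenvalues)) *
        (star hW.1.eigenvectorUnitary : Matrix (Fin p) (Fin p) ℝ) := by
          simp only [Matrix.mul_assoc]; rfl
    _ = _ := by rw [hU, Matrix.mul_one, hD]


private lemma inj2' {m : ℕ} {x y : Fin m} (h : x ≠ y) : Function.Injective ![x, y] := by
  intro i j hij; fin_cases i <;> fin_cases j <;> simp_all

private lemma inj3' {m : ℕ} {x y w : Fin m} (h1 : x ≠ y) (h2 : x ≠ w) (h3 : y ≠ w) :
    Function.Injective ![x, y, w] := by
  intro i j hij; fin_cases i <;> fin_cases j <;> simp_all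

private lemma inj4' {m : ℕ} {x y w v : Fin m} (h1 : x ≠ y) (h2 : x ≠ w) (h3 : x ≠ v)
    (h4 : y ≠ w) (h5 : y ≠ v) (h6 : w ≠ v) : Function.Injective ![x, y, w, v] := by
  intro i j hij; fin_cases i <;> fin_cases j <;> simp_all

private lemma half_eq' : (1:ℝ≥0∞)/2 = 1/4 + 1/4 := by
  simp only [one_div]
  rw [← two_mul, show (4:ℝ≥0∞) = 2*2 by norm_num,
    ENNReal.mul_inv (by norm_num) (by norm_num), ← mul_assoc,
    ENNReal.mul_inv_cancel (by norm_num) (by norm_num), one_mul]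

private lemma one_eq' : (1:ℝ≥0∞)/1 = 1/2 + 1/2 := by
  simp only [one_div]
  rw [inv_one]
  exact ENNReal.inv_two_add_inv_two.symm

private lemma integ4' {Ω : Type*} [MeasurableSpace Ω] {P : Measure Ω} [IsProbabilityMeasure P]
    {m : ℕ} {Z : Ω → Fin m → ℝ} (hL4 : ∀ s, MemLp (fun ω => Z ω s) 4 P)
    (a b c d : Fin m) :
    Integrable (fun ω => Z ω a * Z ω b * Z ω c * Z ω d) P := by
  have h2 : ∀ x y : Fin m, MemLp (fun ω => Z ω x * Z ω y) 2 P := fun x y =>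
    MemLp.smul (φ := fun ω => Z ω x) (f := fun ω => Z ω y) (hL4 y) (hL4 x) (r := 2)
      (hpqr := ⟨by simpa only [one_div] using half_eq'.symm⟩)
  have h1 : MemLp (fun ω => (Z ω a * Z ω b) * (Z ω c * Z ω d)) 1 P :=
    MemLp.smul (φ := fun ω => Z ω a * Z ω b) (h2 c d) (h2 a b) (r := 1)
      (hpqr := ⟨by simpa only [one_div] using one_eq'.symm⟩)
  exact (h1.integrable le_rfl).congr (Eventually.of_forall fun ω => by ring)

private lemma quad_form_eq' {p m : ℕ} (Γ : Matrix (Fin p) (Fin m) ℝ)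
    (M : Matrix (Fin p) (Fin p) ℝ) (z : Fin m → ℝ) :
    Γ.mulVec z ⬝ᵥ M.mulVec (Γ.mulVec z)
      = ∑ i, ∑ j, (Γᵀ * M * Γ) i j * (z i * z j) := by
  have h : Γ.mulVec z ⬝ᵥ M.mulVec (Γ.mulVec z) = z ⬝ᵥ (Γᵀ * M * Γ).mulVec z := by
    rw [Matrix.mulVec_mulVec, Matrix.dotProduct_mulVec]
    rw [show Γ.mulVec z = Matrix.vecMul z Γᵀ from (Matrix.vecMul_transpose Γ z).symm]
    rw [Matrix.vecMul_vecMul, ← Matrix.dotProduct_mulVec, ← Matrix.mul_assoc]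
  rw [h]
  simp only [dotProduct, Matrix.mulVec, Finset.mul_sum]
  exact Finset.sum_congr rfl fun i _ => Finset.sum_congr rfl fun j _ => by ring

private theorem moment4' {Ω : Type*} [MeasurableSpace Ω] (P : Measure Ω)
    [IsProbabilityMeasure P] {m : ℕ} {Δ : ℝ} (Z : Ω → Fin m → ℝ)
    (hmean : ∀ s, (∫ ω, Z ω s ∂P) = 0)
    (hvar : ∀ s, (∫ ω, (Z ω s) ^ 2 ∂P) = 1)
    (hkurt : ∀ s, (∫ ω, (Z ω s) ^ 4 ∂P) = 3 + Δ)
    (hfac : ∀ (r : ℕ) (s : Fin r → Fin m), Function.Injective s →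
        ∀ ς : Fin r → ℕ, (∀ t, 1 ≤ ς t) → (∑ t, ς t) ≤ 4 →
        (∫ ω, ∏ t, (Z ω (s t)) ^ (ς t) ∂P) = ∏ t, ∫ ω, (Z ω (s t)) ^ (ς t) ∂P)
    (a b c d : Fin m) :
    (∫ ω, Z ω a * Z ω b * Z ω c * Z ω d ∂P) =
      (if a = b then (1:ℝ) else 0) * (if c = d then 1 else 0)
      + (if a = c then (1:ℝ) else 0) * (if b = d then 1 else 0)
      + (if a = d then (1:ℝ) else 0) * (if b = c then 1 else 0)
      + (if a = b ∧ b = c ∧ c = d then Δ else 0) := by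
  have h31 : ∀ x y : Fin m, x ≠ y → (∫ ω, (Z ω x)^3 * Z ω y ∂P) = 0 := by
    intro x y hxy
    have h := hfac 2 ![x,y] (inj2' hxy)
      ![3,1] (by intro t; fin_cases t <;> norm_num) (by simp [Fin.sum_univ_two])
    simp [Fin.prod_univ_two] at h
    rw [h, hmean, mul_zero]
  have h22 : ∀ x y : Fin m, x ≠ y → (∫ ω, (Z ω x)^2 * (Z ω y)^2 ∂P) = 1 := by
    intro x y hxy
    have h := hfac 2 ![x,y] (inj2' hxy)
      ![2,2] (by intro t; fin_cases t <;> norm_num) (by simp [Fin.sum_univ_two])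
    simp [Fin.prod_univ_two] at h
    rw [h, hvar, hvar, mul_one]
  have h211 : ∀ x y w : Fin m, x ≠ y → x ≠ w → y ≠ w →
      (∫ ω, (Z ω x)^2 * Z ω y * Z ω w ∂P) = 0 := by
    intro x y w h1 h2 h3
    have h := hfac 3 ![x,y,w] (inj3' h1 h2 h3)
      ![2,1,1] (by intro t; fin_cases t <;> norm_num) (by simp [Fin.sum_univ_three])
    simp [Fin.prod_univ_three] at h
    rw [show (fun ω => Z ω x ^ 2 * Z ω y * Z ω w) = fun ω => Z ω x ^ 2 * (Z ω y * Z ω w)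
      from funext fun ω => by ring] at h ⊢
    rw [h, hmean, hmean]; ring
  have h1111 : ∀ x y w v : Fin m, x ≠ y → x ≠ w → x ≠ v → y ≠ w → y ≠ v → w ≠ v →
      (∫ ω, Z ω x * Z ω y * Z ω w * Z ω v ∂P) = 0 := by
    intro x y w v h1 h2 h3 h4 h5 h6
    have h := hfac 4 ![x,y,w,v] (inj4' h1 h2 h3 h4 h5 h6)
      ![1,1,1,1] (by intro t; fin_cases t <;> norm_num) (by simp [Fin.sum_univ_four])
    simp [Fin.prod_univ_four] at h
    rw [show (fun ω => Z ω x * Z ω y * Z ω w * Z ω v)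
        = fun ω => Z ω x * (Z ω y * (Z ω w * Z ω v)) from funext fun ω => by ring] at h ⊢
    rw [h, hmean]; ring
  by_cases h1 : a = b
  · subst h1
    by_cases h2 : a = c
    · subst h2
      by_cases h3 : a = d
      · subst h3
        rw [show (fun ω => Z ω a * Z ω a * Z ω a * Z ω a) = fun ω => (Z ω a)^4
          from funext fun ω => by ring, hkurt]
        simp; ring
      · rw [show (fun ω => Z ω a * Z ω a * Z ω a * Z ω d) = fun ω => (Z ω a)^3 * Z ω d
          from funext fun ω => by ring, h31 a d h3]
        simp [h3]
    · by_cases h3 : c = d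
      · subst h3
        rw [show (fun ω => Z ω a * Z ω a * Z ω c * Z ω c) = fun ω => (Z ω a)^2 * (Z ω c)^2
          from funext fun ω => by ring, h22 a c h2]
        simp [h2]
      · by_cases h4 : a = d
        · subst h4
          rw [show (fun ω => Z ω a * Z ω a * Z ω c * Z ω a) = fun ω => (Z ω a)^3 * Z ω c
            from funext fun ω => by ring, h31 a c h2]
          simp [h2, h3, Ne.symm h2]
        · rw [show (fun ω => Z ω a * Z ω a * Z ω c * Z ω d) = fun ω => (Z ω a)^2 * Z ω c * Z ω d
            from funext fun ω => by ring, h211 a c d h2 h4 h3]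
          simp [h2, h3, h4]
  · by_cases h2 : a = c
    · subst h2
      by_cases h3 : b = d
      · subst h3
        rw [show (fun ω => Z ω a * Z ω b * Z ω a * Z ω b) = fun ω => (Z ω a)^2 * (Z ω b)^2
          from funext fun ω => by ring, h22 a b h1]
        simp [h1, Ne.symm h1]
      · by_cases h4 : a = d
        · subst h4
          rw [show (fun ω => Z ω a * Z ω b * Z ω a * Z ω a) = fun ω => (Z ω a)^3 * Z ω b
            from funext fun ω => by ring, h31 a b h1]
          simp [h1, h3, Ne.symm h1]
        · rw [show (fun ω => Z ω a * Z ω b * Z ω a * Z ω d) = fun ω => (Z ω a)^2 * Z ω b * Z ω d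
            from funext fun ω => by ring, h211 a b d h1 h4 h3]
          simp [h1, h3, h4]
    · by_cases h3 : a = d
      · subst h3
        by_cases h4 : b = c
        · subst h4
          rw [show (fun ω => Z ω a * Z ω b * Z ω b * Z ω a) = fun ω => (Z ω a)^2 * (Z ω b)^2
            from funext fun ω => by ring, h22 a b h1]
          simp [h1, h2, Ne.symm h1]
        · rw [show (fun ω => Z ω a * Z ω b * Z ω c * Z ω a) = fun ω => (Z ω a)^2 * Z ω b * Z ω c
            from funext fun ω => by ring, h211 a b c h1 h2 h4]
          simp [h1, h2, h4]
      · by_cases h4 : b = c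
        · subst h4
          by_cases h5 : b = d
          · subst h5
            rw [show (fun ω => Z ω a * Z ω b * Z ω b * Z ω b) = fun ω => (Z ω b)^3 * Z ω a
              from funext fun ω => by ring, h31 b a (Ne.symm h1)]
            simp [h1, h3]
          · rw [show (fun ω => Z ω a * Z ω b * Z ω b * Z ω d) = fun ω => (Z ω b)^2 * Z ω a * Z ω d
              from funext fun ω => by ring, h211 b a d (Ne.symm h1) h5 h3]
            simp [h1, h3, h5]
        · by_cases h5 : b = d
          · subst h5
            rw [show (fun ω => Z ω a * Z ω b * Z ω c * Z ω b) = fun ω => (Z ω b)^2 * Z ω a * Z ω c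
              from funext fun ω => by ring, h211 b a c (Ne.symm h1) h4 h2]
            simp [h1, h2, h4]
          · by_cases h6 : c = d
            · subst h6
              rw [show (fun ω => Z ω a * Z ω b * Z ω c * Z ω c) = fun ω => (Z ω c)^2 * Z ω a * Z ω b
                from funext fun ω => by ring, h211 c a b (Ne.symm h2) (Ne.symm h4) h1]
              simp [h1, h2, h3]
            · rw [h1111 a b c d h1 h2 h3 h4 h5 h6]
              simp [h1, h2, h3, h4, h5, h6]

private theorem quad_bound' {Ω : Type*} [MeasurableSpace Ω] (P : Measure Ω)
    [IsProbabilityMeasure P] {p m : ℕ} {Δ : ℝ} (hΔ : 0 ≤ Δ) (Z : Ω → Fin m → ℝ)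
    (hL4 : ∀ s, MemLp (fun ω => Z ω s) 4 P)
    (hmean : ∀ s, (∫ ω, Z ω s ∂P) = 0)
    (hvar : ∀ s, (∫ ω, (Z ω s) ^ 2 ∂P) = 1)
    (hkurt : ∀ s, (∫ ω, (Z ω s) ^ 4 ∂P) = 3 + Δ)
    (hfac : ∀ (r : ℕ) (s : Fin r → Fin m), Function.Injective s →
        ∀ ς : Fin r → ℕ, (∀ t, 1 ≤ ς t) → (∑ t, ς t) ≤ 4 →
        (∫ ω, ∏ t, (Z ω (s t)) ^ (ς t) ∂P) = ∏ t, ∫ ω, (Z ω (s t)) ^ (ς t) ∂P)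
    (Γ : Matrix (Fin p) (Fin m) ℝ)
    (M : Matrix (Fin p) (Fin p) ℝ) (hM : Mᵀ = M) :
    (∫ ω, (Γ.mulVec (Z ω) ⬝ᵥ M.mulVec (Γ.mulVec (Z ω))) ^ 2 ∂P) ≤
        (Matrix.trace (M * (Γ * Γᵀ))) ^ 2
          + (2 + Δ) * Matrix.trace (M * (Γ * Γᵀ) * M * (Γ * Γᵀ)) := by
  set A : Matrix (Fin m) (Fin m) ℝ := Γᵀ * M * Γ with hA
  have hAT : Aᵀ = A := by
    rw [hA, Matrix.transpose_mul, Matrix.transpose_mul, Matrix.transpose_transpose, hM,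
      Matrix.mul_assoc]
  have hsym : ∀ i j, A j i = A i j := fun i j => congrFun (congrFun hAT i) j
  -- pointwise expansion
  have hpt : (fun ω => (Γ.mulVec (Z ω) ⬝ᵥ M.mulVec (Γ.mulVec (Z ω))) ^ 2)
      = fun ω => ∑ q : (Fin m × Fin m) × (Fin m × Fin m),
          (A q.1.1 q.1.2 * A q.2.1 q.2.2)
            * (Z ω q.1.1 * Z ω q.1.2 * Z ω q.2.1 * Z ω q.2.2) := by
    funext ω
    rw [quad_form_eq' Γ M (Z ω), ← hA]
    have expand : ∀ g : Fin m → Fin m → ℝ,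
        (∑ i, ∑ j, g i j)^2 = ∑ i, ∑ j, ∑ k, ∑ l, g i j * g k l := by
      intro g
      rw [pow_two, Finset.sum_mul_sum]
      refine Finset.sum_congr rfl fun i _ => ?_
      rw [← Finset.sum_comm]
      refine Finset.sum_congr rfl fun j _ => ?_
      rw [Finset.sum_mul_sum]
    simp only [Fintype.sum_prod_type]
    rw [expand]
    exact Finset.sum_congr rfl fun i _ => Finset.sum_congr rfl fun j _ =>
      Finset.sum_congr rfl fun k _ => Finset.sum_congr rfl fun l _ => by ring
  have hInt : ∀ q : (Fin m × Fin m) × (Fin m × Fin m),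
      Integrable (fun ω => (A q.1.1 q.1.2 * A q.2.1 q.2.2)
        * (Z ω q.1.1 * Z ω q.1.2 * Z ω q.2.1 * Z ω q.2.2)) P := fun q =>
    (integ4' hL4 q.1.1 q.1.2 q.2.1 q.2.2).const_mul _
  have key : (∫ ω, (Γ.mulVec (Z ω) ⬝ᵥ M.mulVec (Γ.mulVec (Z ω))) ^ 2 ∂P)
      = (∑ i, A i i) * (∑ i, A i i) + (∑ i, ∑ j, A i j * A i j)
        + (∑ i, ∑ j, A i j * A j i) + Δ * ∑ i, A i i * A i i := by
    rw [hpt, integral_finset_sum _ fun q _ => hInt q]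
    have : ∀ q : (Fin m × Fin m) × (Fin m × Fin m),
        (∫ ω, (A q.1.1 q.1.2 * A q.2.1 q.2.2)
          * (Z ω q.1.1 * Z ω q.1.2 * Z ω q.2.1 * Z ω q.2.2) ∂P)
        = (A q.1.1 q.1.2 * A q.2.1 q.2.2)
          * ((if q.1.1 = q.1.2 then (1:ℝ) else 0) * (if q.2.1 = q.2.2 then 1 else 0)
            + (if q.1.1 = q.2.1 then (1:ℝ) else 0) * (if q.1.2 = q.2.2 then 1 else 0)
            + (if q.1.1 = q.2.2 then (1:ℝ) else 0) * (if q.1.2 = q.2.1 then 1 else 0)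
            + (if q.1.1 = q.1.2 ∧ q.1.2 = q.2.1 ∧ q.2.1 = q.2.2 then Δ else 0)) := by
      intro q
      rw [integral_const_mul, moment4' P Z hmean hvar hkurt hfac]
    simp only [this]
    rw [Fintype.sum_prod_type]
    simp only [Fintype.sum_prod_type]
    have s1 : ∑ i, ∑ j, ∑ k, ∑ l : Fin m, A i j * A k l
        * ((if i = j then (1:ℝ) else 0) * (if k = l then 1 else 0))
        = (∑ i, A i i) * (∑ k, A k k) := by
      simp [mul_ite, ite_mul, mul_zero, zero_mul, mul_one, Finset.sum_ite_eq,
        Finset.mul_sum, Finset.sum_mul]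
      exact Finset.sum_comm
    have s2 : ∑ i, ∑ j, ∑ k, ∑ l : Fin m, A i j * A k l
        * ((if i = k then (1:ℝ) else 0) * (if j = l then 1 else 0))
        = ∑ i, ∑ j, A i j * A i j := by
      simp [mul_ite, ite_mul, mul_zero, zero_mul, mul_one, Finset.sum_ite_eq,
        Finset.sum_ite_eq']
    have s3 : ∑ i, ∑ j, ∑ k, ∑ l : Fin m, A i j * A k l
        * ((if i = l then (1:ℝ) else 0) * (if j = k then 1 else 0))
        = ∑ i, ∑ j, A i j * A j i := by
      simp [mul_ite, ite_mul, mul_zero, zero_mul, mul_one, Finset.sum_ite_eq,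
        Finset.sum_ite_eq']
    have s4 : ∑ i, ∑ j, ∑ k, ∑ l : Fin m, A i j * A k l
        * (if i = j ∧ j = k ∧ k = l then Δ else 0)
        = Δ * ∑ i, A i i * A i i := by
      simp [ite_and, mul_ite, ite_mul, mul_zero, zero_mul, mul_one, Finset.sum_ite_eq,
        Finset.sum_ite_eq', Finset.mul_sum]
      exact Finset.sum_congr rfl fun i _ => by ring
    calc ∑ i, ∑ j, ∑ k, ∑ l : Fin m, A i j * A k l
          * ((if i = j then (1:ℝ) else 0) * (if k = l then 1 else 0)
            + (if i = k then (1:ℝ) else 0) * (if j = l then 1 else 0)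
            + (if i = l then (1:ℝ) else 0) * (if j = k then 1 else 0)
            + (if i = j ∧ j = k ∧ k = l then Δ else 0))
        = (∑ i, ∑ j, ∑ k, ∑ l : Fin m, A i j * A k l
            * ((if i = j then (1:ℝ) else 0) * (if k = l then 1 else 0)))
          + (∑ i, ∑ j, ∑ k, ∑ l : Fin m, A i j * A k l
            * ((if i = k then (1:ℝ) else 0) * (if j = l then 1 else 0)))
          + (∑ i, ∑ j, ∑ k, ∑ l : Fin m, A i j * A k l
            * ((if i = l then (1:ℝ) else 0) * (if j = k then 1 else 0)))
          + (∑ i, ∑ j, ∑ k, ∑ l : Fin m, A i j * A k l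
            * (if i = j ∧ j = k ∧ k = l then Δ else 0)) := by
          simp only [mul_add, Finset.sum_add_distrib]
      _ = _ := by rw [s1, s2, s3, s4]
  -- trace identities
  have htr1 : Matrix.trace (M * (Γ * Γᵀ)) = ∑ i, A i i := by
    rw [← Matrix.mul_assoc, Matrix.trace_mul_comm, ← Matrix.mul_assoc, hA]
    rfl
  have htr2 : Matrix.trace (M * (Γ * Γᵀ) * M * (Γ * Γᵀ)) = ∑ i, ∑ j, A i j * A j i := by
    have : M * (Γ * Γᵀ) * M * (Γ * Γᵀ) = (M * Γ) * ((Γᵀ * M * Γ) * Γᵀ) := by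
      simp only [Matrix.mul_assoc]
    rw [this, Matrix.trace_mul_comm, hA]
    have : Γᵀ * M * Γ * Γᵀ * (M * Γ) = (Γᵀ * M * Γ) * (Γᵀ * M * Γ) := by
      simp only [Matrix.mul_assoc]
    rw [this]
    simp [Matrix.trace, Matrix.diag, Matrix.mul_apply]
  rw [key, htr1, htr2, pow_two]
  have hDle : ∑ i, A i i * A i i ≤ ∑ i, ∑ j, A i j * A j i := by
    have h1 : ∀ i : Fin m, A i i * A i i ≤ ∑ j, A i j * A j i := by
      intro i
      refine Finset.single_le_sum (f := fun j => A i j * A j i) ?_ (Finset.mem_univ i)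
      intro j _
      show (0:ℝ) ≤ A i j * A j i
      rw [hsym j i]
      exact mul_self_nonneg _
    exact Finset.sum_le_sum fun i _ => h1 i
  have h23 : ∑ i, ∑ j, A i j * A i j = ∑ i, ∑ j, A i j * A j i :=
    Finset.sum_congr rfl fun i _ => Finset.sum_congr rfl fun j _ => by rw [hsym j i]
  rw [h23]
  nlinarith [mul_le_mul_of_nonneg_left hDle hΔ]

/-- **Fourth-moment bound for factor-model quadratic forms (Lemma 2.2, same-covariance
case, `Δ ≥ 0`).** With `X = Γ Z`, `Σ = Γ Γᵀ` and `M` symmetric positive semidefinite,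
`E[(Xᵀ M X)²] ≤ (tr(MΣ))² + (2 + Δ) tr(MΣMΣ)`; in particular, for `M = W^{1/2} Σ_α W^{1/2}`
and `Y = W^{1/2} X`, `E[(Yᵀ W^{1/2} Σ_α W^{1/2} Y)²] ≤ (tr(WΣ_α WΣ))² + (2+Δ) tr((WΣ_α WΣ)²)`. -/
theorem stmt_11 {Ω : Type*} [MeasurableSpace Ω] (P : Measure Ω) [IsProbabilityMeasure P]
    (p m : ℕ) (Δ : ℝ) (hΔ : 0 ≤ Δ)
    (Z : Ω → Fin m → ℝ) (hmeas : Measurable Z)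
    (hL4 : ∀ s, MemLp (fun ω => Z ω s) 4 P)
    (hmean : ∀ s, (∫ ω, Z ω s ∂P) = 0)
    (hvar : ∀ s, (∫ ω, (Z ω s) ^ 2 ∂P) = 1)
    (hkurt : ∀ s, (∫ ω, (Z ω s) ^ 4 ∂P) = 3 + Δ)
    (hfac : ∀ (r : ℕ) (s : Fin r → Fin m), Function.Injective s →
        ∀ ς : Fin r → ℕ, (∀ t, 1 ≤ ς t) → (∑ t, ς t) ≤ 4 →
        (∫ ω, ∏ t, (Z ω (s t)) ^ (ς t) ∂P) = ∏ t, ∫ ω, (Z ω (s t)) ^ (ς t) ∂P)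
    (Γ : Matrix (Fin p) (Fin m) ℝ)
    (Sig : Matrix (Fin p) (Fin p) ℝ) (hSig : Sig = Γ * Γᵀ)
    (M : Matrix (Fin p) (Fin p) ℝ) (hM : M.PosSemidef) :
    (∫ ω, (Γ.mulVec (Z ω) ⬝ᵥ M.mulVec (Γ.mulVec (Z ω))) ^ 2 ∂P) ≤
        (Matrix.trace (M * Sig)) ^ 2 + (2 + Δ) * Matrix.trace (M * Sig * M * Sig) ∧
    (∀ (W Sa : Matrix (Fin p) (Fin p) ℝ) (hW : W.PosSemidef), Sa.PosSemidef →
      M = hW.sqrt * Sa * hW.sqrt →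
      (∫ ω, (hW.sqrt.mulVec (Γ.mulVec (Z ω)) ⬝ᵥ
          (hW.sqrt * Sa * hW.sqrt).mulVec (hW.sqrt.mulVec (Γ.mulVec (Z ω)))) ^ 2 ∂P) ≤
        (Matrix.trace (W * Sa * W * Sig)) ^ 2 +
          (2 + Δ) * Matrix.trace (W * Sa * W * Sig * (W * Sa * W * Sig))) := by
  subst hSig
  constructor
  · have hMsym : Mᵀ = M := by
      rw [← Matrix.conjTranspose_eq_transpose_of_trivial]
      exact hM.1
    have h := quad_bound' P hΔ Z hL4 hmean hvar hkurt hfac Γ M hMsym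
    calc (∫ ω, (Γ.mulVec (Z ω) ⬝ᵥ M.mulVec (Γ.mulVec (Z ω))) ^ 2 ∂P)
        ≤ (Matrix.trace (M * (Γ * Γᵀ))) ^ 2
          + (2 + Δ) * Matrix.trace (M * (Γ * Γᵀ) * M * (Γ * Γᵀ)) := h
      _ = _ := by simp only [Matrix.mul_assoc]
  · intro W Sa hW hSa _
    set S : Matrix (Fin p) (Fin p) ℝ := hW.sqrt with hSdef
    have hSsym : Sᵀ = S := by
      rw [← Matrix.conjTranspose_eq_transpose_of_trivial]
      exact sqrt_herm' hW
    have hSS : S * S = W := sqrt_mul_self' hW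
    have hWsym : Wᵀ = W := by
      rw [← Matrix.conjTranspose_eq_transpose_of_trivial]; exact hW.1
    have hSasym : Saᵀ = Sa := by
      rw [← Matrix.conjTranspose_eq_transpose_of_trivial]; exact hSa.1
    have hpt2 : ∀ x : Fin p → ℝ,
        S.mulVec x ⬝ᵥ (S * Sa * S).mulVec (S.mulVec x)
          = x ⬝ᵥ (W * Sa * W).mulVec x := by
      intro x
      rw [Matrix.mulVec_mulVec, Matrix.dotProduct_mulVec,
        show S.mulVec x = Matrix.vecMul x Sᵀ from (Matrix.vecMul_transpose S x).symm,
        hSsym, Matrix.vecMul_vecMul, ← Matrix.dotProduct_mulVec]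
      congr 2
      rw [← hSS]
      simp only [Matrix.mul_assoc]
    have hN : (W * Sa * W)ᵀ = W * Sa * W := by
      rw [Matrix.transpose_mul, Matrix.transpose_mul, hWsym, hSasym, Matrix.mul_assoc]
    have h := quad_bound' P hΔ Z hL4 hmean hvar hkurt hfac Γ (W * Sa * W) hN
    calc (∫ ω, (S.mulVec (Γ.mulVec (Z ω)) ⬝ᵥ
            (S * Sa * S).mulVec (S.mulVec (Γ.mulVec (Z ω)))) ^ 2 ∂P)
        = (∫ ω, (Γ.mulVec (Z ω) ⬝ᵥ (W * Sa * W).mulVec (Γ.mulVec (Z ω))) ^ 2 ∂P) := by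
          congr 1
          funext ω
          rw [hpt2]
      _ ≤ (Matrix.trace ((W * Sa * W) * (Γ * Γᵀ))) ^ 2
          + (2 + Δ) * Matrix.trace ((W * Sa * W) * (Γ * Γᵀ) * (W * Sa * W) * (Γ * Γᵀ)) := h
      _ = _ := by simp only [Matrix.mul_assoc]
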